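/- For 0 ≤ t₁ < t₂, x > t₁²/4 and real z not in [t₂²/4, ∞), the transition density f⁽¹'²⁾_{t₁,t₂}(x,y) = (t₂-t₁)√(4y - t₂²) / (2π[(y-x)² - (t₂-t₁)(t₁y - t₂x)]) on y > t₂²/4 satisfies ∫_{t₂²/4}^∞ f⁽¹'²⁾_{t₁,t₂}(x,y)/(z-y) dy = 1/(F(z) - x), where F(z) = (1/4)[t₁² - (t₂-t₁+√(t₂²-4z))²]. -/

import Mathlib

open Real Filter MeasureTheory Set

set_option maxHeartbeats 2000000 in
lemma stmt14_key (s τ σ d t₁ p y x z : ℝ) (hs : 0 < s) (hτ : 0 < τ) (hσ : 0 < σ)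
    (hd : 0 < d) (hp : 0 < p)
    (h1 : y = (s^2 + (t₁+d)^2)/4) (h2 : x = (τ^2 + t₁^2)/4) (h3 : z = ((t₁+d)^2 - σ^2)/4) :
    (16*d*σ/(p*((τ^2 - d^2 + σ^2)^2 + 4*τ^2*d^2))) * (1/(1+(s/σ)^2) * (2/s/σ))
    + (-(2*d*(σ^2-τ^2-d^2))/(p*τ*((τ^2 - d^2 + σ^2)^2 + 4*τ^2*d^2)))
        * (((s-τ)^2+d^2)⁻¹ * (2*(s-τ)*(2/s)) - ((s+τ)^2+d^2)⁻¹ * (2*(s+τ)*(2/s)))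
    + (-(4*(σ^2+τ^2+d^2))/(p*((τ^2 - d^2 + σ^2)^2 + 4*τ^2*d^2)))
        * (1/(1+((s-τ)/d)^2) * (2/s/d) + 1/(1+((s+τ)/d)^2) * (2/s/d))
    = (d * s / (2*p*((y-x)^2 - d*(t₁*y - (t₁+d)*x)))) / (z - y) := by
  subst h1 h2 h3
  have hK : (τ^2 - d^2 + σ^2)^2 + 4*τ^2*d^2 ≠ 0 := by positivity
  have hD : ((s^2 + (t₁+d)^2)/4 - (τ^2 + t₁^2)/4)^2
      - d*(t₁*((s^2 + (t₁+d)^2)/4) - (t₁+d)*((τ^2 + t₁^2)/4))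
      = ((s-τ)^2+d^2) * ((s+τ)^2+d^2) / 16 := by ring
  have hZ : ((t₁+d)^2 - σ^2)/4 - (s^2 + (t₁+d)^2)/4 = -(s^2 + σ^2)/4 := by ring
  rw [hD, hZ]
  have hm1 : ((s-τ)^2+d^2) ≠ 0 := by positivity
  have hm2 : ((s+τ)^2+d^2) ≠ 0 := by positivity
  have hm6 : (s^2+σ^2) ≠ 0 := by positivity
  have e1 : 1/(1+(s/σ)^2) * (2/s/σ) = 2*σ/(s*(s^2+σ^2)) := by
    field_simp
    ring
  have e2 : ((s-τ)^2+d^2)⁻¹ * (2*(s-τ)*(2/s)) = 4*(s-τ)/(s*((s-τ)^2+d^2)) := by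
    field_simp
    ring
  have e3 : ((s+τ)^2+d^2)⁻¹ * (2*(s+τ)*(2/s)) = 4*(s+τ)/(s*((s+τ)^2+d^2)) := by
    field_simp
    ring
  have e4 : 1/(1+((s-τ)/d)^2) * (2/s/d) = 2*d/(s*((s-τ)^2+d^2)) := by
    rw [eq_div_iff (by positivity)]
    field_simp
    ring
  have e5 : 1/(1+((s+τ)/d)^2) * (2/s/d) = 2*d/(s*((s+τ)^2+d^2)) := by
    rw [eq_div_iff (by positivity)]
    field_simp
    ring
  have eR : (d * s / (2*p*(((s-τ)^2+d^2) * ((s+τ)^2+d^2) / 16))) / (-(s^2+σ^2)/4)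
      = -(32*d*s) / (p*(((s-τ)^2+d^2) * ((s+τ)^2+d^2))*(s^2+σ^2)) := by
    have h4 : -(s^2+σ^2)/4 ≠ 0 := div_ne_zero (neg_ne_zero.2 hm6) (by norm_num)
    rw [div_div, div_eq_div_iff (mul_ne_zero (by positivity) h4) (by positivity)]
    ring
  rw [e1, e2, e3, e4, e5, eR]
  rw [eq_div_iff (by positivity)]
  field_simp
  ring


set_option maxHeartbeats 1000000 in
theorem stmt14 (t₁ t₂ : ℝ) (ht₁ : 0 ≤ t₁) (ht : t₁ < t₂) (x : ℝ)
    (hx : t₁^2/4 < x) (z : ℝ) (hz : z < t₂^2/4) :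
    ∫ y in Set.Ioi (t₂^2/4),
        ((t₂-t₁) * Real.sqrt (4*y - t₂^2)
          / (2*Real.pi * ((y-x)^2 - (t₂-t₁)*(t₁*y - t₂*x)))) / (z - y)
      = 1 / ((1/4) * (t₁^2 - (t₂ - t₁ + Real.sqrt (t₂^2 - 4*z))^2) - x) := by
  have hπ : (0:ℝ) < π := Real.pi_pos
  set d : ℝ := t₂ - t₁ with hddef
  have hd : 0 < d := by simp only [hddef]; linarith
  have hτ2 : (0:ℝ) < 4*x - t₁^2 := by nlinarith
  set τ : ℝ := Real.sqrt (4*x - t₁^2) with hτdef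
  have hτ : 0 < τ := Real.sqrt_pos.2 hτ2
  have hτsq : τ^2 = 4*x - t₁^2 := Real.sq_sqrt hτ2.le
  have hσ2 : (0:ℝ) < t₂^2 - 4*z := by nlinarith
  set σ : ℝ := Real.sqrt (t₂^2 - 4*z) with hσdef
  have hσ : 0 < σ := Real.sqrt_pos.2 hσ2
  have hσsq : σ^2 = t₂^2 - 4*z := Real.sq_sqrt hσ2.le
  set K : ℝ := (τ^2 - d^2 + σ^2)^2 + 4*τ^2*d^2 with hKdef
  have hK : 0 < K := by rw [hKdef]; positivity
  set C1 : ℝ := 16*d*σ/(π*K) with hC1def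
  set C2 : ℝ := -(2*d*(σ^2-τ^2-d^2))/(π*τ*K) with hC2def
  set C3 : ℝ := -(4*(σ^2+τ^2+d^2))/(π*K) with hC3def
  set S : ℝ → ℝ := fun y => Real.sqrt (4*y - t₂^2) with hSdef
  set G : ℝ → ℝ := fun y =>
    C1 * Real.arctan (S y / σ)
    + C2 * (Real.log ((S y - τ)^2 + d^2) - Real.log ((S y + τ)^2 + d^2))
    + C3 * (Real.arctan ((S y - τ)/d) + Real.arctan ((S y + τ)/d)) with hGdef
  -- continuity
  have hScont : Continuous S := by
    rw [hSdef]
    exact Real.continuous_sqrt.comp (by continuity)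
  have hlog : ∀ c : ℝ, Continuous (fun y => Real.log ((S y + c)^2 + d^2)) := by
    intro c
    apply Real.continuousOn_log.comp_continuous (by continuity)
    intro y
    simp only [Set.mem_compl_iff, Set.mem_singleton_iff]
    positivity
  have hGcont : Continuous G := by
    rw [hGdef]
    refine Continuous.add (Continuous.add ?_ ?_) ?_
    · exact continuous_const.mul (Real.continuous_arctan.comp (hScont.div_const σ))
    · have h1 : Continuous (fun y => Real.log ((S y - τ)^2 + d^2)) := by
        simpa [sub_eq_add_neg] using hlog (-τ)
      exact continuous_const.mul (h1.sub (hlog τ))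
    · have h1 : Continuous (fun y => Real.arctan ((S y - τ)/d)) :=
        Real.continuous_arctan.comp ((hScont.sub continuous_const).div_const d)
      have h2 : Continuous (fun y => Real.arctan ((S y + τ)/d)) :=
        Real.continuous_arctan.comp ((hScont.add continuous_const).div_const d)
      exact continuous_const.mul (h1.add h2)
  -- tendsto of S
  have hStop : Tendsto S atTop atTop := by
    rw [tendsto_atTop_atTop]
    intro b
    refine ⟨(b^2 + t₂^2)/4, fun y hy => ?_⟩
    calc b ≤ |b| := le_abs_self b
    _ = Real.sqrt (b^2) := (Real.sqrt_sq_eq_abs b).symm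
    _ ≤ S y := Real.sqrt_le_sqrt (by linarith)
  -- tendsto pieces
  have harctop : Tendsto Real.arctan atTop (nhds (π/2)) :=
    Real.tendsto_arctan_atTop.mono_right nhdsWithin_le_nhds
  have T1 : Tendsto (fun y => Real.arctan (S y / σ)) atTop (nhds (π/2)) :=
    harctop.comp (hStop.atTop_div_const hσ)
  have T3 : Tendsto (fun y => Real.arctan ((S y - τ)/d)) atTop (nhds (π/2)) := by
    have hinner : Tendsto (fun y => (S y - τ)/d) atTop atTop := by
      apply Tendsto.atTop_div_const hd
      simpa [sub_eq_add_neg] using tendsto_atTop_add_const_right atTop (-τ) hStop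
    exact harctop.comp hinner
  have T3' : Tendsto (fun y => Real.arctan ((S y + τ)/d)) atTop (nhds (π/2)) := by
    have hinner : Tendsto (fun y => (S y + τ)/d) atTop atTop :=
      Tendsto.atTop_div_const hd (tendsto_atTop_add_const_right atTop τ hStop)
    exact harctop.comp hinner
  have T2 : Tendsto (fun y => Real.log ((S y - τ)^2 + d^2) - Real.log ((S y + τ)^2 + d^2))
      atTop (nhds 0) := by
    have h0 : Tendsto (fun u : ℝ => 4*τ*u/((u+τ)^2+d^2)) atTop (nhds 0) := by
      apply squeeze_zero' (eventually_atTop.2 ⟨1, fun u hu => ?_⟩)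
        (eventually_atTop.2 ⟨1, fun u hu => ?_⟩)
        (show Tendsto (fun u : ℝ => 4*τ/u) atTop (nhds 0) from
          tendsto_const_nhds.div_atTop tendsto_id)
      · positivity
      · rw [div_le_div_iff₀ (by positivity) (by linarith)]
        nlinarith
    have hratio : Tendsto (fun u : ℝ => ((u-τ)^2+d^2)/((u+τ)^2+d^2)) atTop (nhds 1) := by
      have heq : ∀ u : ℝ, ((u-τ)^2+d^2)/((u+τ)^2+d^2) = 1 - 4*τ*u/((u+τ)^2+d^2) := by
        intro u
        have hne : (u+τ)^2+d^2 ≠ 0 := by positivity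
        field_simp
        ring
      simp only [heq]
      simpa using tendsto_const_nhds.sub h0
    have hlog1 : Tendsto (fun y => Real.log (((S y - τ)^2+d^2)/((S y + τ)^2+d^2)))
        atTop (nhds 0) := by
      have := ((Real.continuousAt_log one_ne_zero).tendsto.comp hratio).comp hStop
      simpa [Function.comp_def, Real.log_one] using this
    refine hlog1.congr fun y => ?_
    rw [Real.log_div (by positivity) (by positivity)]
  have hGtop : Tendsto G atTop (nhds (C1 * (π/2) + C2 * 0 + C3 * (π/2 + π/2))) := by
    rw [hGdef]
    exact ((T1.const_mul C1).add (T2.const_mul C2)).add ((T3.add T3').const_mul C3)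
  have hT : t₁ + d = t₂ := by rw [hddef]; ring
  have hDpos : ∀ y : ℝ, t₂^2/4 < y → 0 < (y-x)^2 - d*(t₁*y - t₂*x) := by
    intro y hy
    have h1 : (y-x)^2 - d*(t₁*y - t₂*x) = (y - x - d*t₁/2)^2 + d^2*(4*x - t₁^2)/4 := by
      rw [hddef]; ring
    have h2 : 0 < d^2*(4*x-t₁^2)/4 := by
      exact div_pos (mul_pos (pow_pos hd 2) hτ2) (by norm_num)
    rw [h1]
    nlinarith [sq_nonneg (y - x - d*t₁/2)]
  have hneg : ∀ y ∈ Set.Ioi (t₂^2/4),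
      (d * Real.sqrt (4*y - t₂^2) / (2*π*((y-x)^2 - d*(t₁*y - t₂*x)))) / (z - y) ≤ 0 := by
    intro y hy
    rw [Set.mem_Ioi] at hy
    have h1 : 0 ≤ d * Real.sqrt (4*y - t₂^2) / (2*π*((y-x)^2 - d*(t₁*y - t₂*x))) :=
      div_nonneg (mul_nonneg hd.le (Real.sqrt_nonneg _))
        (by have := hDpos y hy; positivity)
    exact div_nonpos_of_nonneg_of_nonpos h1 (by nlinarith)
  have hderiv : ∀ y ∈ Set.Ioi (t₂^2/4), HasDerivAt G
      ((d * Real.sqrt (4*y - t₂^2) / (2*π*((y-x)^2 - d*(t₁*y - t₂*x)))) / (z - y)) y := by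
    intro y hy
    rw [Set.mem_Ioi] at hy
    have hy4 : 0 < 4*y - t₂^2 := by nlinarith
    have hs : 0 < S y := Real.sqrt_pos.2 hy4
    have hssq : S y ^ 2 = 4*y - t₂^2 := Real.sq_sqrt hy4.le
    have hSd : HasDerivAt S (2 / S y) y := by
      have h1 : HasDerivAt (fun w : ℝ => 4*w - t₂^2) 4 y := by
        simpa using ((hasDerivAt_id y).const_mul (4:ℝ)).sub_const (t₂^2)
      have h2 := (Real.hasDerivAt_sqrt hy4.ne').comp y h1
      have h4 : HasDerivAt (fun w : ℝ => Real.sqrt (4*w - t₂^2))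
          (2 / Real.sqrt (4*y - t₂^2)) y := by
        refine h2.congr_deriv ?_
        have hne : Real.sqrt (4*y - t₂^2) ≠ 0 := hs.ne'
        field_simp
        ring
      exact h4
    have A1 : HasDerivAt (fun w => Real.arctan (S w / σ))
        (1/(1+(S y/σ)^2) * (2 / S y / σ)) y := by
      have := (Real.hasDerivAt_arctan (S y/σ)).comp y (hSd.div_const σ)
      simpa [Function.comp_def] using this
    have A2 : ∀ c : ℝ, HasDerivAt (fun w => Real.log ((S w + c)^2 + d^2))
        (((S y + c)^2 + d^2)⁻¹ * (2*(S y + c)*(2 / S y))) y := by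
      intro c
      have hne : ((S y + c)^2 + d^2) ≠ 0 := by positivity
      have hin : HasDerivAt (fun w => (S w + c)^2 + d^2) (2*(S y + c)*(2 / S y)) y := by
        have := ((hSd.add_const c).pow 2).add_const (d^2)
        refine this.congr_deriv ?_
        norm_num
      have := (Real.hasDerivAt_log hne).comp y hin
      simpa [Function.comp_def] using this
    have A3 : ∀ c : ℝ, HasDerivAt (fun w => Real.arctan ((S w + c)/d))
        (1/(1+((S y + c)/d)^2) * (2 / S y / d)) y := by
      intro c
      have := (Real.hasDerivAt_arctan ((S y + c)/d)).comp y ((hSd.add_const c).div_const d)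
      simpa [Function.comp_def] using this
    have A2m : HasDerivAt (fun w => Real.log ((S w - τ)^2 + d^2))
        (((S y - τ)^2 + d^2)⁻¹ * (2*(S y - τ)*(2 / S y))) y := by
      have := A2 (-τ); simpa [sub_eq_add_neg] using this
    have A3m : HasDerivAt (fun w => Real.arctan ((S w - τ)/d))
        (1/(1+((S y - τ)/d)^2) * (2 / S y / d)) y := by
      have := A3 (-τ); simpa [sub_eq_add_neg] using this
    have hGd : HasDerivAt G
        (C1 * (1/(1+(S y/σ)^2) * (2 / S y / σ))
         + C2 * ((((S y - τ)^2 + d^2)⁻¹ * (2*(S y - τ)*(2 / S y)))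
            - (((S y + τ)^2 + d^2)⁻¹ * (2*(S y + τ)*(2 / S y))))
         + C3 * ((1/(1+((S y - τ)/d)^2) * (2 / S y / d))
            + (1/(1+((S y + τ)/d)^2) * (2 / S y / d)))) y := by
      rw [hGdef]
      exact ((A1.const_mul C1).add ((A2m.sub (A2 τ)).const_mul C2)).add
        ((A3m.add (A3 τ)).const_mul C3)
    have hyv : y = (S y^2 + (t₁+d)^2)/4 := by rw [hT]; linarith
    have hxv : x = (τ^2 + t₁^2)/4 := by linarith
    have hzv : z = ((t₁+d)^2 - σ^2)/4 := by rw [hT]; linarith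
    have heq := stmt14_key (S y) τ σ d t₁ π y x z hs hτ hσ hd hπ hyv hxv hzv
    have hfin : C1 * (1/(1+(S y/σ)^2) * (2 / S y / σ))
         + C2 * ((((S y - τ)^2 + d^2)⁻¹ * (2*(S y - τ)*(2 / S y)))
            - (((S y + τ)^2 + d^2)⁻¹ * (2*(S y + τ)*(2 / S y))))
         + C3 * ((1/(1+((S y - τ)/d)^2) * (2 / S y / d))
            + (1/(1+((S y + τ)/d)^2) * (2 / S y / d)))
        = (d * Real.sqrt (4*y - t₂^2) / (2*π*((y-x)^2 - d*(t₁*y - t₂*x)))) / (z - y) := by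
      rw [hC1def, hC2def, hC3def, hKdef]
      rw [show Real.sqrt (4*y - t₂^2) = S y from rfl]
      rw [show t₂ = t₁ + d from hT.symm]
      exact heq
    exact hfin ▸ hGd
  rw [MeasureTheory.integral_Ioi_of_hasDerivAt_of_nonpos hGcont.continuousWithinAt
    hderiv hneg hGtop]
  have hSa : S (t₂^2/4) = 0 := by
    show Real.sqrt (4*(t₂^2/4) - t₂^2) = 0
    rw [show 4*(t₂^2/4) - t₂^2 = 0 by ring]
    exact Real.sqrt_zero
  have hGa : G (t₂^2/4) = 0 := by
    rw [hGdef]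
    simp only [hSa]
    rw [show ((0:ℝ) - τ)^2 = (0 + τ)^2 by ring]
    rw [show ((0:ℝ) - τ)/d = -((0 + τ)/d) by ring]
    simp [Real.arctan_neg]
  rw [hGa, sub_zero]
  have hT2 : (1/4) * (t₁^2 - (d + σ)^2) - x = -((σ+d)^2 + τ^2)/4 := by
    linear_combination (1/4 : ℝ) * hτsq
  rw [hT2]
  rw [hC1def, hC2def, hC3def]
  rw [eq_div_iff (div_ne_zero (neg_ne_zero.2 (by positivity)) (by norm_num))]
  field_simp
  rw [hKdef]
  ring
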